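/- Let p ∈ ℝ[x,y] and suppose the curve p = 0 contains, for all large t > 0, the point (x̃(t), ỹ(t)) where x̃(t) = a_k t^k + o(t^k) and ỹ(t) = b_l t^l + o(t^l) with a_k ≠ 0, b_l ≠ 0, and (x̃(t), ỹ(t)) → ∞ as t → ∞. Then the line {(i,j) ∈ ℝ² : ki + lj = d}, where d = max{ki+lj : coefficient of x^i y^j in p is nonzero}, meets the Newton polygon of p in at least two lattice points with nonzero coefficient; moreover max(k,l) > 0. -/

import Mathlib

open MvPolynomial Filter

/-- Lemma 2. If the curve `p = 0` contains, for all large `t`, a point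
`(xc(t), yc(t))` with `xc(t) = a_k t^k (1+o(1))`, `yc(t) = b_l t^l (1+o(1))`,
`a_k, b_l ≠ 0`, tending to infinity, then the supporting line `{k i + l j = d}`,
`d = max{k i + l j : (i,j) ∈ supp p}`, meets the support of `p` in at least two
points, and `max k l > 0`; i.e. `(k,l)` is a normal vector of an outer edge of the
Newton polygon of `p`. -/
theorem branch_at_infinity_gives_outer_edge
    (p : MvPolynomial (Fin 2) ℝ) (hp : p ≠ 0) (k l : ℤ)
    (a b : ℝ) (ha : a ≠ 0) (hb : b ≠ 0)
    (xc yc : ℝ → ℝ)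
    (hx : Tendsto (fun t => xc t / (a * t ^ k)) atTop (nhds 1))
    (hy : Tendsto (fun t => yc t / (b * t ^ l)) atTop (nhds 1))
    (hinf : Tendsto (fun t => ‖(xc t, yc t)‖) atTop atTop)
    (hzero : ∀ᶠ t in atTop, eval ![xc t, yc t] p = 0)
    (d : ℤ) (hd : ∀ m ∈ p.support, k * (m 0 : ℤ) + l * (m 1 : ℤ) ≤ d)
    (hdmax : ∃ m ∈ p.support, k * (m 0 : ℤ) + l * (m 1 : ℤ) = d) :
    (∃ m₁ ∈ p.support, ∃ m₂ ∈ p.support, m₁ ≠ m₂ ∧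
        k * (m₁ 0 : ℤ) + l * (m₁ 1 : ℤ) = d ∧
        k * (m₂ 0 : ℤ) + l * (m₂ 1 : ℤ) = d) ∧
      0 < max k l := by
  classical
  set e : (Fin 2 →₀ ℕ) → ℤ := fun m => k * (m 0 : ℤ) + l * (m 1 : ℤ) with he
  -- Part 2 : 0 < max k l
  have hbddaux : ∀ (j : ℤ), j ≤ 0 → ∃ c : ℝ, Tendsto (fun t : ℝ => t ^ j) atTop (nhds c) := by
    intro j hj
    rcases hj.lt_or_eq with hj | hj
    · exact ⟨0, tendsto_zpow_atTop_zero hj⟩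
    · exact ⟨1, by simp [hj]⟩
  have hcoord : ∀ (j : ℤ) (c : ℝ) (f : ℝ → ℝ), c ≠ 0 → j ≤ 0 →
      Tendsto (fun t => f t / (c * t ^ j)) atTop (nhds 1) →
      ∃ L, Tendsto f atTop (nhds L) := by
    intro j c f hc hj hf
    obtain ⟨c', hc'⟩ := hbddaux j hj
    refine ⟨1 * (c * c'), ?_⟩
    have := hf.mul (tendsto_const_nhds.mul hc' : Tendsto (fun t : ℝ => c * t ^ j) atTop (nhds (c * c')))
    refine this.congr' ?_
    filter_upwards [eventually_gt_atTop (0 : ℝ)] with t ht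
    have : c * t ^ j ≠ 0 := mul_ne_zero hc (zpow_ne_zero j ht.ne')
    field_simp
  have hmaxkl : 0 < max k l := by
    by_contra h
    push_neg at h
    obtain ⟨Lx, hLx⟩ := hcoord k a xc ha (le_trans (le_max_left k l) h) hx
    obtain ⟨Ly, hLy⟩ := hcoord l b yc hb (le_trans (le_max_right k l) h) hy
    have : Tendsto (fun t => ‖(xc t, yc t)‖) atTop (nhds ‖(Lx, Ly)‖) :=
      ((hLx.prodMk_nhds hLy).norm)
    exact not_tendsto_atTop_of_tendsto_nhds this hinf
  -- Per-monomial limits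
  have hterm : ∀ m ∈ p.support,
      Tendsto (fun t => coeff m p * (xc t ^ (m 0) * yc t ^ (m 1)) / t ^ d) atTop
        (nhds (if e m = d then coeff m p * (a ^ (m 0) * b ^ (m 1)) else 0)) := by
    intro m hm
    have hR : Tendsto (fun t => (xc t ^ (m 0) * yc t ^ (m 1)) /
        ((a * t ^ k) ^ (m 0) * (b * t ^ l) ^ (m 1))) atTop (nhds 1) := by
      have := (hx.pow (m 0)).mul (hy.pow (m 1))
      simp only [one_pow, one_mul] at this
      refine this.congr fun t => ?_
      rw [div_pow, div_pow, div_mul_div_comm]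
    have hpow : Tendsto (fun t : ℝ => t ^ (e m - d)) atTop
        (nhds (if e m = d then 1 else 0)) := by
      rcases eq_or_ne (e m) d with hed | hed
      · simp [hed]
      · have : e m - d < 0 := sub_neg.mpr ((hd m hm).lt_of_ne hed)
        simpa [hed] using tendsto_zpow_atTop_zero this
      -- combine
    have hcomb := ((hR.mul hpow).const_mul (coeff m p * (a ^ (m 0) * b ^ (m 1))))
    refine hcomb.congr' ?_ |>.mono_right (le_of_eq ?_)
    · filter_upwards [eventually_gt_atTop (0 : ℝ)] with t ht
      have htne : t ≠ 0 := ht.ne'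
      have hab : (a * t ^ k) ^ (m 0) * (b * t ^ l) ^ (m 1)
          = a ^ (m 0) * b ^ (m 1) * t ^ (e m) := by
        rw [mul_pow, mul_pow, ← zpow_natCast (t ^ k) (m 0), ← zpow_mul,
          ← zpow_natCast (t ^ l) (m 1), ← zpow_mul, he]
        simp only [zpow_add₀ htne]
        ring
      have hne : a ^ (m 0) * b ^ (m 1) * t ^ (e m) ≠ 0 :=
        mul_ne_zero (mul_ne_zero (pow_ne_zero _ ha) (pow_ne_zero _ hb)) (zpow_ne_zero _ htne)
      rw [hab]
      rw [zpow_sub₀ htne]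
      field_simp
    · rcases eq_or_ne (e m) d with hed | hed <;> simp [hed]
  -- sum limit
  have hsum : Tendsto (fun t => ∑ m ∈ p.support, coeff m p * (xc t ^ (m 0) * yc t ^ (m 1)) / t ^ d)
      atTop (nhds (∑ m ∈ p.support, if e m = d then coeff m p * (a ^ (m 0) * b ^ (m 1)) else 0)) :=
    tendsto_finset_sum _ hterm
  have hevaleq : ∀ t : ℝ, eval ![xc t, yc t] p / t ^ d
      = ∑ m ∈ p.support, coeff m p * (xc t ^ (m 0) * yc t ^ (m 1)) / t ^ d := by
    intro t
    rw [eval_eq', Finset.sum_div]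
    refine Finset.sum_congr rfl fun m _ => ?_
    congr 1
    rw [Fin.prod_univ_two]
    simp
  have hS0 : (∑ m ∈ p.support, if e m = d then coeff m p * (a ^ (m 0) * b ^ (m 1)) else 0) = 0 := by
    have h2 : Tendsto (fun t : ℝ => eval ![xc t, yc t] p / t ^ d) atTop
        (nhds (∑ m ∈ p.support, if e m = d then coeff m p * (a ^ (m 0) * b ^ (m 1)) else 0)) :=
      hsum.congr fun t => (hevaleq t).symm
    have h3 : Tendsto (fun t : ℝ => eval ![xc t, yc t] p / t ^ d) atTop (nhds 0) := by
      refine Tendsto.congr' ?_ tendsto_const_nhds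
      filter_upwards [hzero] with t ht
      simp [ht]
    exact tendsto_nhds_unique h2 h3
  rw [← Finset.sum_filter] at hS0
  refine ⟨?_, hmaxkl⟩
  obtain ⟨m₀, hm₀, hm₀d⟩ := hdmax
  by_contra hcon
  push_neg at hcon
  have hsingle : p.support.filter (fun m => e m = d) = {m₀} := by
    apply Finset.eq_singleton_iff_unique_mem.mpr
    refine ⟨Finset.mem_filter.mpr ⟨hm₀, hm₀d⟩, fun m hm => ?_⟩
    obtain ⟨hm1, hm2⟩ := Finset.mem_filter.mp hm
    by_contra hne
    exact hcon m hm1 m₀ hm₀ hne hm2 hm₀d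
  rw [hsingle, Finset.sum_singleton] at hS0
  exact (mul_ne_zero (mem_support_iff.mp hm₀)
    (mul_ne_zero (pow_ne_zero _ ha) (pow_ne_zero _ hb))) hS0
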